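/- arXiv:alg-geom/9712002 — 2 statements merged into one kernel-verified Lean document; each statement's English description precedes it below -/
import Mathlib

section
/- Assume Assumption (†). Let V be a subvariety of ℙ^m over F with V(F) infinite. Then there exist finitely many weakly saturated locally closed subvarieties W₁, …, W_k ⊆ V such that lim_{B→∞} N(W₁ ∪ ⋯ ∪ W_k, B)/N(V,B) = 1. -/
open Filter Topology

namespace ProjSat

/-- The set of `F`-rational points of projective `m`-space, modelled as the
projectivization of `F^(m+1)`. -/
abbrev Pt (F : Type) [Field F] (m : ℕ) := Projectivization F (Fin (m + 1) → F)

variable (F : Type) [Field F] (m : ℕ)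

/-- A polynomial `p` vanishes at a point `x ∈ ℙ^m(F)` if it vanishes on every
vector representing `x`. -/
def Vanishes (p : MvPolynomial (Fin (m + 1)) F) (x : Pt F m) : Prop :=
  ∀ (v : Fin (m + 1) → F) (hv : v ≠ 0),
    Projectivization.mk F v hv = x → MvPolynomial.eval v p = 0

/-- The Zariski topology on `ℙ^m(F)`: it is generated by the complements of the
zero loci of homogeneous polynomials. -/
instance zariskiTopology : TopologicalSpace (Pt F m) :=
  TopologicalSpace.generateFrom
    { U | ∃ (p : MvPolynomial (Fin (m + 1)) F) (d : ℕ),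
        p.IsHomogeneous d ∧ U = { x | ¬ Vanishes F m p x } }

variable {F m}

/-- The dimension of a subvariety: the topological Krull dimension of the subspace. -/
noncomputable def dimv (V : Set (Pt F m)) : WithBot ℕ∞ :=
  topologicalKrullDim V

variable (H : Pt F m → ℝ)

/-- The height counting function `N(V, B) = #{x ∈ V(F) : H(x) ≤ B}`. -/
noncomputable def Ncount (V : Set (Pt F m)) (B : ℝ) : ℕ :=
  {x ∈ V | H x ≤ B}.ncard

/-- The counting ratio `B ↦ N(V', B) / N(V, B)`. -/
noncomputable def ratio (V' V : Set (Pt F m)) : ℝ → ℝ :=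
  fun B => (Ncount H V' B : ℝ) / (Ncount H V B : ℝ)

/-- Assumption (†): for all locally closed subvarieties `V' ⊆ V` of `ℙ^m` over `F`
with `V(F)` infinite, the limit `lim_{B→∞} N(V',B)/N(V,B)` exists. -/
def Dagger : Prop :=
  ∀ V' V : Set (Pt F m), IsLocallyClosed V' → IsLocallyClosed V → V' ⊆ V →
    V.Infinite → ∃ L : ℝ, Tendsto (ratio H V' V) atTop (𝓝 L)

/-- `U` is a dense Zariski open subset of `V`. -/
def IsDenseOpenIn (U V : Set (Pt F m)) : Prop :=
  (∃ O : Set (Pt F m), IsOpen O ∧ U = V ∩ O) ∧ V ⊆ closure U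

/-- `V` is weakly saturated: `V` is irreducible, `V(F)` is infinite, and for every
locally closed subvariety `W ⊆ V` with `dim W < dim V` one has
`lim_{B→∞} N(W,B)/N(V,B) < 1`. -/
def WeaklySaturated (V : Set (Pt F m)) : Prop :=
  IsIrreducible V ∧ V.Infinite ∧
    ∀ W : Set (Pt F m), IsLocallyClosed W → W ⊆ V → dimv W < dimv V →
      ∃ L : ℝ, Tendsto (ratio H W V) atTop (𝓝 L) ∧ L < 1

/-- `V` is strongly saturated: `V` is irreducible, `V(F)` is infinite, and for every
dense Zariski open subset `U ⊆ V` one has `lim_{B→∞} N(U,B)/N(V,B) = 1`. -/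
def StronglySaturated (V : Set (Pt F m)) : Prop :=
  IsIrreducible V ∧ V.Infinite ∧
    ∀ U : Set (Pt F m), IsDenseOpenIn U V →
      Tendsto (ratio H U V) atTop (𝓝 1)

end ProjSat

open ProjSat Filter Topology

section Counting

variable {F : Type} [Field F] {m : ℕ} (H : Pt F m → ℝ)
  (hN : ∀ B : ℝ, {x : Pt F m | H x ≤ B}.Finite)

include hN

theorem Nset_finite (V : Set (Pt F m)) (B : ℝ) : {x ∈ V | H x ≤ B}.Finite :=
  (hN B).subset (fun x hx => hx.2)

theorem Ncount_mono {V' V : Set (Pt F m)} (h : V' ⊆ V) (B : ℝ) :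
    Ncount H V' B ≤ Ncount H V B :=
  Set.ncard_le_ncard (fun x hx => ⟨h hx.1, hx.2⟩) (Nset_finite H hN V B)

omit hN in
theorem Ncount_le_ncard {W : Set (Pt F m)} (hW : W.Finite) (B : ℝ) :
    Ncount H W B ≤ W.ncard :=
  Set.ncard_le_ncard (fun x hx => hx.1) hW

theorem Ncount_tendsto {V : Set (Pt F m)} (hV : V.Infinite) :
    Tendsto (fun B => Ncount H V B) atTop atTop := by
  apply tendsto_atTop_atTop_of_monotone
  · intro B₁ B₂ h
    exact Set.ncard_le_ncard (fun x hx => ⟨hx.1, hx.2.trans h⟩) (Nset_finite H hN V B₂)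
  · intro n
    obtain ⟨t, htV, htfin, htn⟩ := hV.exists_subset_ncard_eq n
    obtain ⟨B, hB⟩ := (htfin.image H).bddAbove
    refine ⟨B, ?_⟩
    rw [← htn]
    exact Set.ncard_le_ncard (fun x hx => ⟨htV hx, hB ⟨x, hx, rfl⟩⟩) (Nset_finite H hN V B)

omit hN in
theorem ratio_nonneg (V' V : Set (Pt F m)) (B : ℝ) : 0 ≤ ratio H V' V B :=
  div_nonneg (Nat.cast_nonneg _) (Nat.cast_nonneg _)

theorem ratio_le_one {V' V : Set (Pt F m)} (h : V' ⊆ V) (B : ℝ) : ratio H V' V B ≤ 1 := by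
  rcases Nat.eq_zero_or_pos (Ncount H V B) with h0 | hpos
  · have : Ncount H V' B = 0 := Nat.le_zero.mp (h0 ▸ Ncount_mono H hN h B)
    simp [ratio, this]
  · exact div_le_one_of_le₀ (Nat.cast_le.mpr (Ncount_mono H hN h B)) (Nat.cast_nonneg _)

theorem ratio_add {U₁ U₂ : Set (Pt F m)} (hdisj : U₁ ∩ U₂ = ∅) (V : Set (Pt F m)) (B : ℝ) :
    ratio H (U₁ ∪ U₂) V B = ratio H U₁ V B + ratio H U₂ V B := by
  have hset : {x ∈ U₁ ∪ U₂ | H x ≤ B} = {x ∈ U₁ | H x ≤ B} ∪ {x ∈ U₂ | H x ≤ B} := by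
    ext x; constructor
    · rintro ⟨hx | hx, hB⟩
      · exact Or.inl ⟨hx, hB⟩
      · exact Or.inr ⟨hx, hB⟩
    · rintro (⟨hx, hB⟩ | ⟨hx, hB⟩)
      · exact ⟨Or.inl hx, hB⟩
      · exact ⟨Or.inr hx, hB⟩
  have hd : Disjoint {x ∈ U₁ | H x ≤ B} {x ∈ U₂ | H x ≤ B} := by
    rw [Set.disjoint_iff_inter_eq_empty]
    ext x
    simp only [Set.mem_inter_iff, Set.mem_setOf_eq, Set.mem_empty_iff_false, iff_false]
    rintro ⟨⟨h1, _⟩, ⟨h2, _⟩⟩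
    exact absurd (Set.mem_inter h1 h2) (by rw [hdisj]; exact Set.notMem_empty x)
  have : Ncount H (U₁ ∪ U₂) B = Ncount H U₁ B + Ncount H U₂ B := by
    show {x ∈ U₁ ∪ U₂ | H x ≤ B}.ncard = _
    rw [hset, Set.ncard_union_eq hd (Nset_finite H hN U₁ B) (Nset_finite H hN U₂ B)]
    rfl
  simp only [ratio, this, Nat.cast_add, add_div]

theorem ratio_mul {W U V : Set (Pt F m)} (h : W ⊆ U) (B : ℝ) :
    ratio H W V B = ratio H W U B * ratio H U V B := by
  rcases Nat.eq_zero_or_pos (Ncount H U B) with h0 | hpos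
  · have : Ncount H W B = 0 := Nat.le_zero.mp (h0 ▸ Ncount_mono H hN h B)
    simp [ratio, this]
  · rw [ratio, ratio, ratio, div_mul_div_cancel₀]
    exact Nat.cast_ne_zero.mpr hpos.ne'

theorem tendsto_ratio_self {V : Set (Pt F m)} (hV : V.Infinite) :
    Tendsto (ratio H V V) atTop (𝓝 1) := by
  have h1 : ∀ᶠ B in atTop, ratio H V V B = 1 := by
    filter_upwards [(Ncount_tendsto H hN hV).eventually_ge_atTop 1] with B hB
    rw [ratio, div_self]
    exact Nat.cast_ne_zero.mpr (by omega)
  exact Tendsto.congr' (h1.mono fun B hB => hB.symm) tendsto_const_nhds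

theorem tendsto_ratio_zero_of_finite {W V : Set (Pt F m)} (hW : W.Finite) (hV : V.Infinite) :
    Tendsto (ratio H W V) atTop (𝓝 0) := by
  have hub : ∀ B, ratio H W V B ≤ (W.ncard : ℝ) / (Ncount H V B : ℝ) := by
    intro B
    rcases Nat.eq_zero_or_pos (Ncount H V B) with h0 | hpos
    · simp [ratio, h0]
    · rw [ratio]
      gcongr
      exact Nat.cast_le.mpr (Ncount_le_ncard H hW B)
  have hlim : Tendsto (fun B => (W.ncard : ℝ) / (Ncount H V B : ℝ)) atTop (𝓝 0) :=
    Tendsto.div_atTop tendsto_const_nhds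
      (tendsto_natCast_atTop_atTop.comp (Ncount_tendsto H hN hV))
  exact tendsto_of_tendsto_of_tendsto_of_le_of_le tendsto_const_nhds hlim
    (fun B => ratio_nonneg H W V B) hub
end Counting

section Zariski

open MvPolynomial

theorem eval_smul_homog {σ R : Type} [CommRing R] [Fintype σ] {p : MvPolynomial σ R} {n : ℕ}
    (h : p.IsHomogeneous n) (a : R) (v : σ → R) :
    eval (a • v) p = a ^ n * eval v p := by
  rw [eval_eq', eval_eq', Finset.mul_sum]
  apply Finset.sum_congr rfl
  intro d hd
  have hdeg : ∑ i, d i = n := by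
    have h2 := h (mem_support_iff.mp hd)
    rw [Finsupp.weight_apply, Finsupp.sum] at h2
    simp only [smul_eq_mul, Pi.one_apply, mul_one] at h2
    rw [← h2]
    refine (Finset.sum_subset (Finset.subset_univ d.support) ?_).symm
    intro x _ hx
    simpa using Finsupp.notMem_support_iff.mp hx
  have : ∏ i, (a • v) i ^ d i = a ^ n * ∏ i, v i ^ d i := by
    simp only [Pi.smul_apply, smul_eq_mul, mul_pow]
    rw [Finset.prod_mul_distrib, Finset.prod_pow_eq_pow_sum, hdeg]
  rw [this]; ring

variable {F : Type} [Field F] {m : ℕ}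

/-- The zero locus of a polynomial. -/
def ZSet (p : MvPolynomial (Fin (m + 1)) F) : Set (Pt F m) := {x | Vanishes F m p x}

theorem vanishes_iff_rep {p : MvPolynomial (Fin (m + 1)) F} {d : ℕ}
    (hp : p.IsHomogeneous d) (x : Pt F m) :
    Vanishes F m p x ↔ eval x.rep p = 0 := by
  constructor
  · intro h
    exact h x.rep x.rep_nonzero x.mk_rep
  · intro h v hv hmk
    have : Projectivization.mk F v hv = Projectivization.mk F x.rep x.rep_nonzero := by
      rw [hmk, x.mk_rep]
    obtain ⟨a, ha⟩ := (Projectivization.mk_eq_mk_iff F v x.rep hv x.rep_nonzero).mp this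
    rw [← ha]
    show eval ((a : F) • x.rep) p = 0
    rw [eval_smul_homog hp, h, mul_zero]

theorem isClosed_ZSet {p : MvPolynomial (Fin (m + 1)) F} {d : ℕ} (hp : p.IsHomogeneous d) :
    IsClosed (ZSet p) := by
  rw [← isOpen_compl_iff]
  exact TopologicalSpace.isOpen_generateFrom_of_mem ⟨p, d, hp, rfl⟩

theorem ZSet_mul {p q : MvPolynomial (Fin (m + 1)) F} {d e : ℕ}
    (hp : p.IsHomogeneous d) (hq : q.IsHomogeneous e) :
    ZSet (p * q) = ZSet p ∪ ZSet q := by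
  ext x
  simp only [ZSet, Set.mem_setOf_eq, Set.mem_union,
    vanishes_iff_rep (hp.mul hq), vanishes_iff_rep hp, vanishes_iff_rep hq, map_mul]
  exact mul_eq_zero

theorem ZSet_one : ZSet (1 : MvPolynomial (Fin (m + 1)) F) = ∅ := by
  ext x
  simp only [ZSet, Set.mem_setOf_eq, Set.mem_empty_iff_false, iff_false]
  intro h
  simpa using h x.rep x.rep_nonzero x.mk_rep

theorem compl_sInter_basic (s : Finset (Set (Pt F m)))
    (hs : ∀ g ∈ s, ∃ (p : MvPolynomial (Fin (m + 1)) F) (d : ℕ),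
      p.IsHomogeneous d ∧ g = {x | ¬ Vanishes F m p x}) :
    ∃ (q : MvPolynomial (Fin (m + 1)) F) (e : ℕ),
      q.IsHomogeneous e ∧ (⋂₀ (s : Set (Set (Pt F m))))ᶜ = ZSet q := by
  classical
  induction s using Finset.induction_on with
  | empty => exact ⟨1, 0, isHomogeneous_one _ _, by simp [ZSet_one]⟩
  | @insert g s hg ih =>
      obtain ⟨p, d, hp, hgeq⟩ := hs g (Finset.mem_insert_self g s)
      obtain ⟨q, e, hq, hsq⟩ := ih (fun g' hg' => hs g' (Finset.mem_insert_of_mem hg'))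
      refine ⟨p * q, d + e, hp.mul hq, ?_⟩
      rw [ZSet_mul hp hq, ← hsq, Finset.coe_insert, Set.sInter_insert, Set.compl_inter, hgeq]
      congr 1
      ext x
      simp [ZSet]

theorem exists_ZSet_of_not_mem {C : Set (Pt F m)} (hC : IsClosed C) {x : Pt F m} (hx : x ∉ C) :
    ∃ (q : MvPolynomial (Fin (m + 1)) F) (e : ℕ),
      q.IsHomogeneous e ∧ C ⊆ ZSet q ∧ x ∉ ZSet q := by
  classical
  have hbasis := TopologicalSpace.isTopologicalBasis_of_subbasis
    (rfl : zariskiTopology F m = TopologicalSpace.generateFrom _)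
  obtain ⟨t, ⟨f, ⟨hffin, hfsub⟩, rfl⟩, hxt, htC⟩ :=
    hbasis.exists_subset_of_mem_open hx hC.isOpen_compl
  obtain ⟨q, e, hq, hcompl⟩ := compl_sInter_basic hffin.toFinset
    (by intro g hg; exact hfsub (hffin.mem_toFinset.mp hg))
  rw [hffin.coe_toFinset] at hcompl
  refine ⟨q, e, hq, ?_, ?_⟩
  · rw [← hcompl]
    intro y hy hyf
    exact htC hyf hy
  · rw [← hcompl]
    simpa using hxt

/-- The ideal of all polynomials all of whose values vanish on `C`. -/
def vanishIdeal (C : Set (Pt F m)) : Ideal (MvPolynomial (Fin (m + 1)) F) where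
  carrier := {p | ∀ x ∈ C, Vanishes F m p x}
  add_mem' := by
    intro p q hp hq x hx v hv hmk
    simp [map_add, hp x hx v hv hmk, hq x hx v hv hmk]
  zero_mem' := by intro x hx v hv hmk; simp
  smul_mem' := by
    intro r p hp x hx v hv hmk
    simp [smul_eq_mul, map_mul, hp x hx v hv hmk]

/-- The ideal generated by homogeneous polynomials vanishing on `C`. -/
noncomputable def hIdeal (C : Set (Pt F m)) : Ideal (MvPolynomial (Fin (m + 1)) F) :=
  Ideal.span {p | (∃ d, p.IsHomogeneous d) ∧ C ⊆ ZSet p}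

theorem hIdeal_antitone {C D : Set (Pt F m)} (h : C ⊆ D) : hIdeal D ≤ hIdeal C :=
  Ideal.span_mono (fun p hp => ⟨hp.1, h.trans hp.2⟩)

theorem hIdeal_le_vanishIdeal (C : Set (Pt F m)) : hIdeal C ≤ vanishIdeal C :=
  Ideal.span_le.mpr (fun p hp x hx => hp.2 hx)

theorem hIdeal_strict_anti {C D : Set (Pt F m)} (hC : IsClosed C) (h : C ⊂ D) :
    hIdeal D < hIdeal C := by
  refine lt_of_le_of_ne (hIdeal_antitone h.1) (fun heq => ?_)
  obtain ⟨x, hxD, hxC⟩ := Set.not_subset.mp h.2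
  obtain ⟨q, e, hq, hCq, hxq⟩ := exists_ZSet_of_not_mem hC hxC
  have hqD : q ∈ hIdeal D := by
    rw [heq]
    exact Ideal.subset_span ⟨⟨e, hq⟩, hCq⟩
  exact hxq (hIdeal_le_vanishIdeal D hqD x hxD)

end Zariski

section Dim

variable {X : Type*} [TopologicalSpace X]

theorem isPreirreducible_of_between {A B : Set X} (hA : IsPreirreducible A) (hAB : A ⊆ B)
    (hBc : B ⊆ closure A) : IsPreirreducible B := by
  intro u v hu hv ⟨x, hxB, hxu⟩ ⟨y, hyB, hyv⟩
  have hAu : (A ∩ u).Nonempty := by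
    have := hBc hxB
    rw [mem_closure_iff] at this
    exact (this u hu hxu).imp (fun z hz => ⟨hz.2, hz.1⟩)
  have hAv : (A ∩ v).Nonempty := by
    have := hBc hyB
    rw [mem_closure_iff] at this
    exact (this v hv hyv).imp (fun z hz => ⟨hz.2, hz.1⟩)
  exact (hA u v hu hv hAu hAv).imp (fun z hz => ⟨hAB hz.1, hz.2⟩)

theorem isPreirreducible_of_image {t : Set X} {B : Set ↥t}
    (h : IsPreirreducible (Subtype.val '' B)) : IsPreirreducible B := by
  intro u v hu hv ⟨x, hxB, hxu⟩ ⟨y, hyB, hyv⟩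
  obtain ⟨u', hu', rfl⟩ := isOpen_induced_iff.mp hu
  obtain ⟨v', hv', rfl⟩ := isOpen_induced_iff.mp hv
  obtain ⟨z, ⟨⟨w, hwB, rfl⟩, hzu, hzv⟩⟩ :=
    h u' v' hu' hv' ⟨x, ⟨x, hxB, rfl⟩, hxu⟩ ⟨y, ⟨y, hyB, rfl⟩, hyv⟩
  exact ⟨w, hwB, hzu, hzv⟩

open TopologicalSpace in
theorem topologicalKrullDim_mono {s t : Set X} (h : s ⊆ t) :
    topologicalKrullDim s ≤ topologicalKrullDim t := by
  refine Order.krullDim_le_of_strictMono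
    (fun c : IrreducibleCloseds s =>
      (⟨Subtype.val ⁻¹' closure (Subtype.val '' (c : Set s)), ?_, ?_⟩ : IrreducibleCloseds t))
    ?_
  · constructor
    · obtain ⟨x, hx⟩ := c.isIrreducible.nonempty
      exact ⟨⟨(x : X), h x.2⟩, subset_closure ⟨x, hx, rfl⟩⟩
    · apply isPreirreducible_of_image
      rw [Subtype.image_preimage_coe]
      refine isPreirreducible_of_between
        (A := Subtype.val '' (c : Set s))
        (c.isIrreducible.image _ continuous_subtype_val.continuousOn).isPreirreducible
        ?_ Set.inter_subset_right
      intro z hz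
      obtain ⟨w, hw, rfl⟩ := hz
      exact ⟨h w.2, subset_closure ⟨w, hw, rfl⟩⟩
  · exact isClosed_closure.preimage continuous_subtype_val
  · intro c₁ c₂ hlt
    refine lt_of_le_of_ne ?_ ?_
    · intro z hz
      exact closure_mono (Set.image_mono hlt.le) hz
    · intro heq
      obtain ⟨x, hx₂, hx₁⟩ := Set.not_subset.mp (fun hle => hlt.not_ge hle)
      have hxt : ((⟨(x : X), h x.2⟩ : t) : X) ∈ closure (Subtype.val '' (c₁ : Set s)) := by
        have : ((⟨(x : X), h x.2⟩ : t) : X) ∈ closure (Subtype.val '' (c₂ : Set s)) :=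
          subset_closure ⟨x, hx₂, rfl⟩
        have hcarrier : (Subtype.val ⁻¹' closure (Subtype.val '' (c₁ : Set s)) : Set t) =
            Subtype.val ⁻¹' closure (Subtype.val '' (c₂ : Set s)) :=
          congrArg TopologicalSpace.IrreducibleCloseds.carrier heq
        have hmem : (⟨(x : X), h x.2⟩ : t) ∈
            (Subtype.val ⁻¹' closure (Subtype.val '' (c₂ : Set s)) : Set t) := this
        rw [← hcarrier] at hmem
        exact hmem
      have : x ∈ closure (c₁ : Set s) := by
        rw [IsInducing.subtypeVal.closure_eq_preimage_closure_image]
        exact hxt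
      rw [c₁.isClosed.closure_eq] at this
      exact hx₁ this

end Dim

section Main

variable {F : Type} [Field F] {m : ℕ}

theorem dimv_mono {V' V : Set (Pt F m)} (h : V' ⊆ V) : dimv V' ≤ dimv V :=
  topologicalKrullDim_mono h

omit [Field F] in
theorem locallyClosed_isIrreducible {X : Type*} [TopologicalSpace X] {V : Set X}
    (hV : IsLocallyClosed V) (hne : V.Nonempty) (h : IsPreirreducible (closure V)) :
    IsIrreducible V := by
  obtain ⟨U, Z, hU, hZ, rfl⟩ := hV
  refine ⟨hne, ?_⟩
  intro u v hu hv ⟨x, hxV, hxu⟩ ⟨y, hyV, hyv⟩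
  obtain ⟨z, hzc, hzuu, hzvv⟩ := h (U ∩ u) (U ∩ v) (hU.inter hu) (hU.inter hv)
    ⟨x, subset_closure hxV, hxV.1, hxu⟩ ⟨y, subset_closure hyV, hyV.1, hyv⟩
  have hzZ : z ∈ Z := by
    have : closure (U ∩ Z) ⊆ Z := closure_minimal Set.inter_subset_right hZ
    exact this hzc
  exact ⟨z, ⟨hzuu.1, hzZ⟩, hzuu.2, hzvv.2⟩

/-- The well-founded "smaller subvariety" relation: lexicographic on
(dimension, homogeneous vanishing ideal of the closure). -/
def shrinks (V' V : Set (Pt F m)) : Prop :=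
  Prod.Lex (· < ·) (· > ·) (dimv V', hIdeal (closure V')) (dimv V, hIdeal (closure V))

theorem shrinks_wf : WellFounded (shrinks (F := F) (m := m)) := by
  have h1 : WellFounded ((· < ·) : WithBot ℕ∞ → WithBot ℕ∞ → Prop) := wellFounded_lt
  have h2 : WellFounded
      ((· > ·) : Ideal (MvPolynomial (Fin (m + 1)) F) → Ideal (MvPolynomial (Fin (m + 1)) F) → Prop) :=
    wellFounded_gt
  exact InvImage.wf (fun V : Set (Pt F m) => (dimv V, hIdeal (closure V))) (h1.prod_lex h2)

theorem shrinks_of_dim_lt {V' V : Set (Pt F m)} (h : dimv V' < dimv V) : shrinks V' V :=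
  Prod.Lex.left _ _ h

theorem shrinks_of_closure_lt {V' V : Set (Pt F m)} (h1 : dimv V' ≤ dimv V)
    (h2 : closure V' ⊂ closure V) : shrinks V' V := by
  rcases lt_or_eq_of_le h1 with hlt | heq
  · exact Prod.Lex.left _ _ hlt
  · show Prod.Lex _ _ _ _
    rw [heq]
    exact Prod.Lex.right _ (hIdeal_strict_anti isClosed_closure h2)

theorem ratio_empty (H : Pt F m → ℝ) (V : Set (Pt F m)) (B : ℝ) : ratio H ∅ V B = 0 := by
  have h : {x ∈ (∅ : Set (Pt F m)) | H x ≤ B} = ∅ := by simp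
  show ((Set.ncard {x ∈ (∅ : Set (Pt F m)) | H x ≤ B} : ℝ)) / _ = 0
  rw [h, Set.ncard_empty]
  simp

theorem main_decomp (H : Pt F m → ℝ) (hN : ∀ B : ℝ, {x : Pt F m | H x ≤ B}.Finite)
    (hdagger : Dagger H) (V : Set (Pt F m)) (hV : IsLocallyClosed V) (hVinf : V.Infinite) :
    ∃ 𝒲 : Set (Set (Pt F m)), 𝒲.Finite ∧
      (∀ W ∈ 𝒲, IsLocallyClosed W ∧ W ⊆ V ∧ WeaklySaturated H W) ∧
      Tendsto (ratio H (⋃₀ 𝒲) V) atTop (𝓝 1) := by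
  induction V using (shrinks_wf (F := F) (m := m)).induction with
  | _ V IH => ?_
  clear * - IH hV hVinf hN hdagger
  by_cases hirr : IsPreirreducible (closure V)
  · -- the closure is irreducible
    have hVirr : IsIrreducible V := locallyClosed_isIrreducible hV hVinf.nonempty hirr
    by_cases hws : WeaklySaturated H V
    · refine ⟨{V}, Set.finite_singleton V, ?_, ?_⟩
      · rintro W hW
        rw [Set.mem_singleton_iff] at hW
        subst hW
        exact ⟨hV, subset_rfl, hws⟩
      · rw [Set.sUnion_singleton]
        exact tendsto_ratio_self H hN hVinf
    · have hkey : ∃ W, IsLocallyClosed W ∧ W ⊆ V ∧ dimv W < dimv V ∧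
          ¬ ∃ L, Tendsto (ratio H W V) atTop (𝓝 L) ∧ L < 1 := by
        by_contra hcon
        push_neg at hcon
        exact hws ⟨hVirr, hVinf, fun W h1 h2 h3 => hcon W h1 h2 h3⟩
      obtain ⟨W, hWlc, hWV, hWdim, hnot⟩ := hkey
      obtain ⟨L, hL⟩ := hdagger W V hWlc hV hWV hVinf
      have hL1 : L = 1 := by
        have hle : L ≤ 1 := le_of_tendsto hL (Eventually.of_forall (ratio_le_one H hN hWV))
        have hge : ¬ L < 1 := fun hlt => hnot ⟨L, hL, hlt⟩
        exact le_antisymm hle (not_lt.mp hge)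
      subst hL1
      have hWinf : W.Infinite := by
        by_contra hfin
        rw [Set.not_infinite] at hfin
        have h0 := tendsto_ratio_zero_of_finite H hN hfin hVinf
        have := tendsto_nhds_unique hL h0
        norm_num at this
      obtain ⟨𝒲, h𝒲fin, h𝒲props, h𝒲lim⟩ := IH W (shrinks_of_dim_lt hWdim) hWlc hWinf
      refine ⟨𝒲, h𝒲fin, ?_, ?_⟩
      · intro W' hW'
        exact ⟨(h𝒲props W' hW').1, (h𝒲props W' hW').2.1.trans hWV, (h𝒲props W' hW').2.2⟩
      · have hsub : ⋃₀ 𝒲 ⊆ W := Set.sUnion_subset (fun W' hW' => (h𝒲props W' hW').2.1)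
        have heq : ratio H (⋃₀ 𝒲) V = fun B => ratio H (⋃₀ 𝒲) W B * ratio H W V B :=
          funext (fun B => ratio_mul H hN hsub B)
        rw [heq]
        simpa using h𝒲lim.mul hL
  · -- the closure is reducible: split
    simp only [IsPreirreducible] at hirr
    push_neg at hirr
    obtain ⟨u, v, hu, hv, hne_u, hne_v, hni⟩ := hirr
    set V₁ : Set (Pt F m) := V ∩ u with hV₁def
    set V₂ : Set (Pt F m) := V ∩ uᶜ with hV₂def
    have hV₁lc : IsLocallyClosed V₁ := hV.inter hu.isLocallyClosed
    have hV₂lc : IsLocallyClosed V₂ := hV.inter hu.isClosed_compl.isLocallyClosed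
    have hV₁sub : V₁ ⊆ V := Set.inter_subset_left
    have hV₂sub : V₂ ⊆ V := Set.inter_subset_left
    have hunion : V₁ ∪ V₂ = V := by
      rw [hV₁def, hV₂def, ← Set.inter_union_distrib_left, Set.union_compl_self, Set.inter_univ]
    have hdisj : V₁ ∩ V₂ = ∅ := by
      rw [hV₁def, hV₂def]
      ext x
      simp only [Set.mem_inter_iff, Set.mem_compl_iff, Set.mem_empty_iff_false, iff_false]
      tauto
    have hc₁ : closure V₁ ⊂ closure V := by
      obtain ⟨y, hyc, hyv⟩ := hne_v
      have hsubv : closure V₁ ⊆ vᶜ := by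
        apply closure_minimal ?_ hv.isClosed_compl
        intro x ⟨hxV, hxu⟩ hxv
        have : x ∈ closure V ∩ (u ∩ v) := ⟨subset_closure hxV, hxu, hxv⟩
        rw [hni] at this
        exact this
      refine ⟨closure_mono hV₁sub, fun hsup => ?_⟩
      exact hsubv (hsup hyc) hyv
    have hc₂ : closure V₂ ⊂ closure V := by
      obtain ⟨y, hyc, hyu⟩ := hne_u
      have hsubu : closure V₂ ⊆ uᶜ :=
        closure_minimal Set.inter_subset_right hu.isClosed_compl
      refine ⟨closure_mono hV₂sub, fun hsup => ?_⟩
      exact hsubu (hsup hyc) hyu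
    obtain ⟨δ₁, hδ₁⟩ := hdagger V₁ V hV₁lc hV hV₁sub hVinf
    obtain ⟨δ₂, hδ₂⟩ := hdagger V₂ V hV₂lc hV hV₂sub hVinf
    have hsum : δ₁ + δ₂ = 1 := by
      have h1 : Tendsto (ratio H V V) atTop (𝓝 (δ₁ + δ₂)) := by
        have heq : ratio H V V = fun B => ratio H V₁ V B + ratio H V₂ V B := by
          funext B
          rw [← ratio_add H hN hdisj V B, hunion]
        rw [heq]
        exact hδ₁.add hδ₂
      exact tendsto_nhds_unique h1 (tendsto_ratio_self H hN hVinf)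
    have piece : ∀ (V' : Set (Pt F m)) (δ : ℝ), IsLocallyClosed V' → V' ⊆ V → shrinks V' V →
        Tendsto (ratio H V' V) atTop (𝓝 δ) →
        ∃ 𝒲 : Set (Set (Pt F m)), 𝒲.Finite ∧
          (∀ W ∈ 𝒲, IsLocallyClosed W ∧ W ⊆ V' ∧ WeaklySaturated H W) ∧
          Tendsto (ratio H (⋃₀ 𝒲) V) atTop (𝓝 δ) := by
      intro V' δ hlc hsub hrel hδ
      by_cases hinf : V'.Infinite
      · obtain ⟨𝒲, hfin, hprops, hlim⟩ := IH V' hrel hlc hinf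
        refine ⟨𝒲, hfin, hprops, ?_⟩
        have hsub' : ⋃₀ 𝒲 ⊆ V' := Set.sUnion_subset (fun W' hW' => (hprops W' hW').2.1)
        have heq : ratio H (⋃₀ 𝒲) V = fun B => ratio H (⋃₀ 𝒲) V' B * ratio H V' V B :=
          funext (fun B => ratio_mul H hN hsub' B)
        rw [heq]
        simpa using hlim.mul hδ
      · rw [Set.not_infinite] at hinf
        have h0 := tendsto_ratio_zero_of_finite H hN hinf hVinf
        have hδ0 : δ = 0 := tendsto_nhds_unique hδ h0
        refine ⟨∅, Set.finite_empty, by simp, ?_⟩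
        rw [Set.sUnion_empty, hδ0]
        have heq : ratio H ∅ V = fun _ => (0 : ℝ) := funext (fun B => ratio_empty H V B)
        rw [heq]
        exact tendsto_const_nhds
    obtain ⟨𝒲₁, hfin₁, hprops₁, hlim₁⟩ := piece V₁ δ₁ hV₁lc hV₁sub
      (shrinks_of_closure_lt (dimv_mono hV₁sub) hc₁) hδ₁
    obtain ⟨𝒲₂, hfin₂, hprops₂, hlim₂⟩ := piece V₂ δ₂ hV₂lc hV₂sub
      (shrinks_of_closure_lt (dimv_mono hV₂sub) hc₂) hδ₂
    refine ⟨𝒲₁ ∪ 𝒲₂, hfin₁.union hfin₂, ?_, ?_⟩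
    · rintro W (hW | hW)
      · exact ⟨(hprops₁ W hW).1, (hprops₁ W hW).2.1.trans hV₁sub, (hprops₁ W hW).2.2⟩
      · exact ⟨(hprops₂ W hW).1, (hprops₂ W hW).2.1.trans hV₂sub, (hprops₂ W hW).2.2⟩
    · rw [Set.sUnion_union]
      have hU₁ : ⋃₀ 𝒲₁ ⊆ V₁ := Set.sUnion_subset (fun W' hW' => (hprops₁ W' hW').2.1)
      have hU₂ : ⋃₀ 𝒲₂ ⊆ V₂ := Set.sUnion_subset (fun W' hW' => (hprops₂ W' hW').2.1)
      have hd : (⋃₀ 𝒲₁) ∩ (⋃₀ 𝒲₂) = ∅ := by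
        rw [← Set.subset_empty_iff, ← hdisj]
        exact Set.inter_subset_inter hU₁ hU₂
      have heq : ratio H (⋃₀ 𝒲₁ ∪ ⋃₀ 𝒲₂) V
          = fun B => ratio H (⋃₀ 𝒲₁) V B + ratio H (⋃₀ 𝒲₂) V B :=
        funext (fun B => ratio_add H hN hd V B)
      rw [heq, ← hsum]
      exact hlim₁.add hlim₂

end Main



/-- **Decomposition into weakly saturated subvarieties.**
Assume Assumption (†).  Let `V` be a subvariety of `ℙ^m` over a number field `F` with
`V(F)` infinite.  Then there exist finitely many weakly saturated locally closed
subvarieties `W₁, …, W_k ⊆ V` with `lim_{B→∞} N(W₁ ∪ ⋯ ∪ W_k, B)/N(V,B) = 1`. -/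
theorem exists_finitely_many_weakly_saturated
    (F : Type) [Field F] [NumberField F] (m : ℕ)
    (H : Pt F m → ℝ) (hHpos : ∀ x, 0 < H x)
    (hNorthcott : ∀ B : ℝ, {x : Pt F m | H x ≤ B}.Finite)
    (hdagger : Dagger H)
    (V : Set (Pt F m)) (hV : IsLocallyClosed V) (hVinf : V.Infinite) :
    ∃ (k : ℕ) (W : Fin k → Set (Pt F m)),
      (∀ i, IsLocallyClosed (W i) ∧ W i ⊆ V ∧ WeaklySaturated H (W i)) ∧
      Tendsto (ratio H (⋃ i, W i) V) atTop (𝓝 1) := by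
  obtain ⟨𝒲, hfin, hprops, hlim⟩ := main_decomp H hNorthcott hdagger V hV hVinf
  obtain ⟨n, f, hf⟩ := hfin.fin_embedding
  refine ⟨n, fun i => f i, fun i => hprops (f i) (by rw [← hf]; exact Set.mem_range_self i), ?_⟩
  have heq : ⋃ i, (f i : Set (Pt F m)) = ⋃₀ 𝒲 := by
    rw [← hf, Set.sUnion_range]
  rw [heq]
  exact hlim
end

section
/- Assume Assumption (†). Let V be a subvariety of ℙ^m over F with V(F) infinite. Then V contains an irreducible locally closed subvariety W ⊆ V which is strongly saturated and satisfies lim_{B→∞} N(W,B)/N(V,B) > 0. -/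
open Filter Topology

open ProjSat Filter Topology

namespace ProjSatAux

open ProjSat MvPolynomial

variable {F : Type} [Field F] {m : ℕ}

lemma hom_eval_smul {p : MvPolynomial (Fin (m + 1)) F} {d : ℕ}
    (hp : p.IsHomogeneous d) (c : F) (v : Fin (m + 1) → F) :
    MvPolynomial.eval (c • v) p = c ^ d * MvPolynomial.eval v p := by
  rw [eval_eq', eval_eq', Finset.mul_sum]
  refine Finset.sum_congr rfl fun dd hdd => ?_
  have hdeg : ∑ i, dd i = d := by
    have h1 : Finsupp.degree dd = d := by
      have := hp (mem_support_iff.mp hdd)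
      rw [Finsupp.degree_eq_weight_one]
      exact this
    rw [← h1, Finsupp.degree]
    exact (Finset.sum_subset (Finset.subset_univ _)
      (fun i _ hi => Finsupp.notMem_support_iff.mp hi)).symm
  have : ∏ i, (c • v) i ^ dd i = c ^ d * ∏ i, v i ^ dd i := by
    simp only [Pi.smul_apply, smul_eq_mul, mul_pow]
    rw [Finset.prod_mul_distrib, Finset.prod_pow_eq_pow_sum, hdeg]
  rw [this]; ring

/-- For a homogeneous polynomial, vanishing at a point is detected by any representative. -/
lemma vanishes_iff_of_isHomogeneous {p : MvPolynomial (Fin (m + 1)) F} {d : ℕ}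
    (hp : p.IsHomogeneous d) {v : Fin (m + 1) → F} (hv : v ≠ 0) {x : Pt F m}
    (hx : Projectivization.mk F v hv = x) :
    Vanishes F m p x ↔ MvPolynomial.eval v p = 0 := by
  constructor
  · intro h; exact h v hv hx
  · intro h w hw hwx
    have : Projectivization.mk F w hw = Projectivization.mk F v hv := by rw [hx, hwx]
    obtain ⟨a, ha⟩ := (Projectivization.mk_eq_mk_iff F w v hw hv).mp this
    have : w = (a : F) • v := by rw [← ha, Units.smul_def]
    rw [this, hom_eval_smul hp, h, mul_zero]

/-- Every point not in a Zariski closed set is separated from it by a polynomial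
vanishing on the whole set. -/
lemma exists_poly_of_not_mem {C : Set (Pt F m)} (hC : IsClosed C) {x : Pt F m} (hx : x ∉ C) :
    ∃ p : MvPolynomial (Fin (m + 1)) F,
      (∀ y ∈ C, Vanishes F m p y) ∧ ¬ Vanishes F m p x := by
  have key : ∀ O : Set (Pt F m), IsOpen O → ∀ x ∈ O,
      ∃ (p : MvPolynomial (Fin (m + 1)) F) (d : ℕ), p.IsHomogeneous d ∧
        ¬ Vanishes F m p x ∧ { y | ¬ Vanishes F m p y } ⊆ O := by
    intro O hO
    have hgen : TopologicalSpace.GenerateOpen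
        { U | ∃ (p : MvPolynomial (Fin (m + 1)) F) (d : ℕ),
            p.IsHomogeneous d ∧ U = { x | ¬ Vanishes F m p x } } O := hO
    induction hgen with
    | basic U hU =>
      obtain ⟨p, d, hpd, rfl⟩ := hU
      exact fun x hx => ⟨p, d, hpd, hx, fun y hy => hy⟩
    | univ =>
      intro x _
      refine ⟨1, 0, isHomogeneous_one _ _, ?_, fun y _ => trivial⟩
      intro h
      have := h (Projectivization.rep x) (Projectivization.rep_nonzero x)
        (Projectivization.mk_rep x)
      simp at this
    | inter O₁ O₂ h₁ h₂ ih₁ ih₂ =>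
      intro x hx
      obtain ⟨p₁, d₁, hp₁, hv₁, hs₁⟩ := ih₁ h₁ x hx.1
      obtain ⟨p₂, d₂, hp₂, hv₂, hs₂⟩ := ih₂ h₂ x hx.2
      refine ⟨p₁ * p₂, d₁ + d₂, hp₁.mul hp₂, ?_, ?_⟩
      · rw [vanishes_iff_of_isHomogeneous (hp₁.mul hp₂) (Projectivization.rep_nonzero x)
          (Projectivization.mk_rep x)]
        rw [vanishes_iff_of_isHomogeneous hp₁ (Projectivization.rep_nonzero x)
          (Projectivization.mk_rep x)] at hv₁
        rw [vanishes_iff_of_isHomogeneous hp₂ (Projectivization.rep_nonzero x)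
          (Projectivization.mk_rep x)] at hv₂
        rw [map_mul]
        exact mul_ne_zero hv₁ hv₂
      · intro y hy
        simp only [Set.mem_setOf_eq] at hy
        have h12 : ¬ Vanishes F m p₁ y ∧ ¬ Vanishes F m p₂ y := by
          by_contra hcon
          rw [not_and_or, not_not, not_not] at hcon
          apply hy
          intro w hw hwx
          rw [map_mul]
          rcases hcon with h | h
          · rw [h w hw hwx, zero_mul]
          · rw [h w hw hwx, mul_zero]
        exact ⟨hs₁ h12.1, hs₂ h12.2⟩
    | sUnion 𝒮 h ih =>
      intro x hx
      obtain ⟨s, hs, hxs⟩ := hx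
      obtain ⟨p, d, h1, h2, h3⟩ := ih s hs (h s hs) x hxs
      exact ⟨p, d, h1, h2, fun y hy => ⟨s, hs, h3 hy⟩⟩
  obtain ⟨p, d, -, h2, h3⟩ := key Cᶜ hC.isOpen_compl x hx
  refine ⟨p, fun y hy => ?_, h2⟩
  by_contra h
  exact h3 h hy

/-- The ideal of polynomials vanishing on a set. -/
def idealOf (C : Set (Pt F m)) : Ideal (MvPolynomial (Fin (m + 1)) F) where
  carrier := { p | ∀ x ∈ C, Vanishes F m p x }
  zero_mem' := fun x _ v _ _ => by simp
  add_mem' := by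
    intro p q hp hq x hx v hv hvx
    rw [map_add, hp x hx v hv hvx, hq x hx v hv hvx, add_zero]
  smul_mem' := by
    intro c p hp x hx v hv hvx
    rw [smul_eq_mul, map_mul, hp x hx v hv hvx, mul_zero]

lemma idealOf_antitone {C C' : Set (Pt F m)} (h : C ⊆ C') : idealOf C' ≤ idealOf C :=
  fun _ hp x hx => hp x (h hx)

lemma eq_of_idealOf_eq {C C' : Set (Pt F m)} (hC : IsClosed C) (hC' : IsClosed C')
    (h : idealOf C = idealOf C') : C = C' := by
  have key : ∀ D D' : Set (Pt F m), IsClosed D → idealOf D = idealOf D' → D' ⊆ D := by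
    intro D D' hD hDD' x hx
    by_contra hxD
    obtain ⟨p, hp1, hp2⟩ := exists_poly_of_not_mem hD hxD
    have : p ∈ idealOf D := hp1
    rw [hDD'] at this
    exact hp2 (this x hx)
  exact (key C' C hC' h.symm).antisymm (key C C' hC h)

/-- The Zariski topology on `ℙ^m(F)` is Noetherian. -/
instance noetherian : TopologicalSpace.NoetherianSpace (Pt F m) := by
  rw [((TopologicalSpace.noetherianSpace_TFAE (Pt F m)).out 0 1 :)]
  constructor
  refine Subrelation.wf (r := InvImage (· > ·) fun C : TopologicalSpace.Closeds (Pt F m) =>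
    idealOf (C : Set (Pt F m))) ?_
    (InvImage.wf _ (wellFounded_gt (α := Ideal (MvPolynomial (Fin (m + 1)) F))))
  intro C C' hlt
  have hle : idealOf (C' : Set (Pt F m)) ≤ idealOf (C : Set (Pt F m)) :=
    idealOf_antitone hlt.le
  refine lt_of_le_of_ne hle ?_
  intro heq
  have : (C : Set (Pt F m)) = (C' : Set (Pt F m)) :=
    eq_of_idealOf_eq C.isClosed C'.isClosed
      (id heq.symm : idealOf (C : Set (Pt F m)) = idealOf (C' : Set (Pt F m)))
  exact hlt.ne (TopologicalSpace.Closeds.ext this)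

section counting

variable {H : Pt F m → ℝ}

lemma ratio_nonneg' (A V : Set (Pt F m)) (B : ℝ) : 0 ≤ ratio H A V B :=
  div_nonneg (Nat.cast_nonneg _) (Nat.cast_nonneg _)

lemma div_le_div_nonneg_right' {a b c : ℝ} (h : a ≤ b) (hc : 0 ≤ c) : a / c ≤ b / c := by
  rcases hc.eq_or_lt with rfl | hc
  · simp
  · exact (div_le_div_iff_of_pos_right hc).mpr h

variable (hNorthcott : ∀ B : ℝ, {x : Pt F m | H x ≤ B}.Finite)

include hNorthcott

lemma slice_finite (A : Set (Pt F m)) (B : ℝ) : {x ∈ A | H x ≤ B}.Finite :=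
  (hNorthcott B).subset fun _ hx => hx.2

lemma ncount_mono {A A' : Set (Pt F m)} (h : A ⊆ A') (B : ℝ) :
    Ncount H A B ≤ Ncount H A' B :=
  Set.ncard_le_ncard (fun x hx => ⟨h hx.1, hx.2⟩) (slice_finite hNorthcott A' B)

lemma ratio_mono {A A' : Set (Pt F m)} (h : A ⊆ A') (V : Set (Pt F m)) (B : ℝ) :
    ratio H A V B ≤ ratio H A' V B :=
  div_le_div_nonneg_right' (Nat.cast_le.mpr (ncount_mono hNorthcott h B)) (Nat.cast_nonneg _)

omit hNorthcott in
lemma ncount_biUnion_le {ι : Type*} [DecidableEq ι] (T : Finset ι) (f : ι → Set (Pt F m)) (B : ℝ) :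
    Ncount H (⋃ i ∈ T, f i) B ≤ ∑ i ∈ T, Ncount H (f i) B := by
  classical
  induction T using Finset.induction with
  | empty => simp [Ncount]
  | insert _ _ hnotmem ih =>
    rename_i a T
    rw [Finset.sum_insert hnotmem]
    refine le_trans ?_ (Nat.add_le_add_left ih _)
    have : Ncount H (⋃ i ∈ insert a T, f i) B ≤
        Ncount H (f a) B + Ncount H (⋃ i ∈ T, f i) B := by
      have hset : {x ∈ ⋃ i ∈ insert a T, f i | H x ≤ B} =
          {x ∈ f a | H x ≤ B} ∪ {x ∈ ⋃ i ∈ T, f i | H x ≤ B} := by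
        rw [Finset.set_biUnion_insert]
        ext x
        simp only [Set.mem_setOf_eq, Set.mem_union]
        tauto
      rw [Ncount, hset]
      exact Set.ncard_union_le _ _
    omega

lemma ratio_le_sum {ι : Type*} [DecidableEq ι] (T : Finset ι) (f : ι → Set (Pt F m))
    {A : Set (Pt F m)} (hA : A ⊆ ⋃ i ∈ T, f i) (V : Set (Pt F m)) (B : ℝ) :
    ratio H A V B ≤ ∑ i ∈ T, ratio H (f i) V B := by
  rw [show (∑ i ∈ T, ratio H (f i) V B) = (∑ i ∈ T, (Ncount H (f i) B : ℝ)) / (Ncount H V B : ℝ)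
    from (Finset.sum_div _ _ _).symm]
  refine div_le_div_nonneg_right' ?_ (Nat.cast_nonneg _)
  calc (Ncount H A B : ℝ) ≤ (Ncount H (⋃ i ∈ T, f i) B : ℝ) := by
        exact_mod_cast ncount_mono hNorthcott hA B
    _ ≤ _ := by exact_mod_cast ncount_biUnion_le T f B

lemma eventually_ncount_pos {A : Set (Pt F m)} (hA : A.Nonempty) :
    ∀ᶠ B in atTop, 0 < Ncount H A B := by
  obtain ⟨a, ha⟩ := hA
  filter_upwards [eventually_ge_atTop (H a)] with B hB
  rw [Ncount, Set.ncard_pos (slice_finite hNorthcott A B)]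
  exact ⟨a, ha, hB⟩

lemma tendsto_ncount_atTop {A : Set (Pt F m)} (hA : A.Infinite) :
    Tendsto (fun B => (Ncount H A B : ℝ)) atTop atTop := by
  rw [tendsto_atTop]
  intro b
  obtain ⟨t, htA, htfin, htcard⟩ := hA.exists_subset_ncard_eq ⌈b⌉₊
  have : ∃ B₀ : ℝ, ∀ y ∈ t, H y ≤ B₀ := by
    rcases t.eq_empty_or_nonempty with rfl | htne
    · exact ⟨0, by simp⟩
    · obtain ⟨B₀, hB₀⟩ := (htfin.image H).bddAbove
      exact ⟨B₀, fun y hy => hB₀ (Set.mem_image_of_mem H hy)⟩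
  obtain ⟨B₀, hB₀⟩ := this
  filter_upwards [eventually_ge_atTop B₀] with B hB
  have hsub : t ⊆ {x ∈ A | H x ≤ B} := fun y hy => ⟨htA hy, (hB₀ y hy).trans hB⟩
  have : ⌈b⌉₊ ≤ Ncount H A B := by
    rw [← htcard, Ncount]
    exact Set.ncard_le_ncard hsub (slice_finite hNorthcott A B)
  calc b ≤ (⌈b⌉₊ : ℝ) := Nat.le_ceil b
    _ ≤ _ := Nat.cast_le.mpr this

lemma ratio_tendsto_zero_of_finite {A V : Set (Pt F m)} (hA : A.Finite) (hV : V.Infinite) :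
    Tendsto (ratio H A V) atTop (𝓝 0) := by
  have hbound : ∀ B, ratio H A V B ≤ (A.ncard : ℝ) / (Ncount H V B : ℝ) := by
    intro B
    refine div_le_div_nonneg_right' ?_ (Nat.cast_nonneg _)
    exact_mod_cast Set.ncard_le_ncard (Set.sep_subset A _) hA
  have h0 : Tendsto (fun B => (A.ncard : ℝ) / (Ncount H V B : ℝ)) atTop (𝓝 0) :=
    Tendsto.div_atTop tendsto_const_nhds (tendsto_ncount_atTop hNorthcott hV)
  exact squeeze_zero (fun B => ratio_nonneg' A V B) hbound h0

lemma ncount_split {U W : Set (Pt F m)} (hUW : U ⊆ W) (B : ℝ) :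
    (Ncount H U B : ℝ) + (Ncount H (W \ U) B : ℝ) = (Ncount H W B : ℝ) := by
  have hdisj : Disjoint {x ∈ U | H x ≤ B} {x ∈ W \ U | H x ≤ B} := by
    rw [Set.disjoint_left]
    rintro x ⟨hxU, -⟩ ⟨⟨-, hxnU⟩, -⟩
    exact hxnU hxU
  have hunion : {x ∈ U | H x ≤ B} ∪ {x ∈ W \ U | H x ≤ B} = {x ∈ W | H x ≤ B} := by
    ext x
    simp only [Set.mem_union, Set.mem_setOf_eq, Set.mem_diff]
    constructor
    · rintro (⟨h1, h2⟩ | ⟨⟨h1, -⟩, h2⟩)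
      · exact ⟨hUW h1, h2⟩
      · exact ⟨h1, h2⟩
    · rintro ⟨h1, h2⟩
      by_cases hx : x ∈ U
      · exact Or.inl ⟨hx, h2⟩
      · exact Or.inr ⟨⟨h1, hx⟩, h2⟩
  rw [Ncount, Ncount, Ncount, ← hunion,
    Set.ncard_union_eq hdisj (slice_finite hNorthcott U B) (slice_finite hNorthcott (W \ U) B)]
  push_cast
  ring

end counting

end ProjSatAux

/-- **Existence of a strongly saturated subvariety with positive density.**
Assume Assumption (†).  Let `V` be a subvariety of `ℙ^m` over a number field `F` with
`V(F)` infinite.  Then `V` contains an irreducible locally closed subvariety `W ⊆ V`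
which is strongly saturated and satisfies `lim_{B→∞} N(W,B)/N(V,B) > 0`. -/
theorem exists_strongly_saturated_subvariety
    (F : Type) [Field F] [NumberField F] (m : ℕ)
    (H : Pt F m → ℝ) (hHpos : ∀ x, 0 < H x)
    (hNorthcott : ∀ B : ℝ, {x : Pt F m | H x ≤ B}.Finite)
    (hdagger : Dagger H)
    (V : Set (Pt F m)) (hV : IsLocallyClosed V) (hVinf : V.Infinite) :
    ∃ W : Set (Pt F m), IsLocallyClosed W ∧ W ⊆ V ∧ IsIrreducible W ∧
      StronglySaturated H W ∧
      ∃ L : ℝ, Tendsto (ratio H W V) atTop (𝓝 L) ∧ 0 < L := by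
  classical
  open TopologicalSpace in
  obtain ⟨O', C', hO', hC', hVeq⟩ := hV
  have hVsub : V ⊆ C' := by rw [hVeq]; exact Set.inter_subset_right
  have hclV : closure V ⊆ C' := closure_minimal hVsub hC'
  have hVne : V.Nonempty := hVinf.nonempty
  -- the ratio of `V` against itself tends to `1`
  have hVVone : Tendsto (ratio H V V) atTop (𝓝 1) := by
    refine Tendsto.congr' ?_ (tendsto_const_nhds (x := (1 : ℝ)))
    filter_upwards [ProjSatAux.eventually_ncount_pos hNorthcott hVne] with B hB
    exact (div_self (by exact_mod_cast hB.ne' : (Ncount H V B : ℝ) ≠ 0)).symm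
  -- the family of closed irreducible subsets of `closure V` with positive density
  set 𝒮 : Set (TopologicalSpace.Closeds (Pt F m)) :=
    {Z | IsIrreducible (Z : Set (Pt F m)) ∧ (Z : Set (Pt F m)) ⊆ closure V ∧
      ∃ L : ℝ, Tendsto (ratio H ((Z : Set (Pt F m)) ∩ V) V) atTop (𝓝 L) ∧ 0 < L} with h𝒮def
  -- `𝒮` is nonempty
  have h𝒮ne : 𝒮.Nonempty := by
    obtain ⟨T, hTirr, hTsup⟩ := TopologicalSpace.NoetherianSpace.exists_finset_irreducible
      (⟨closure V, isClosed_closure⟩ : TopologicalSpace.Closeds (Pt F m))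
    have hcoe : closure V = ⋃ t ∈ T, (t : Set (Pt F m)) := by
      have h1 : ((⟨closure V, isClosed_closure⟩ : TopologicalSpace.Closeds (Pt F m)) :
          Set (Pt F m)) = ((T.sup id : TopologicalSpace.Closeds (Pt F m)) : Set (Pt F m)) := by
        rw [← hTsup]
      simpa [TopologicalSpace.Closeds.coe_finset_sup, Finset.sup_set_eq_biUnion] using h1
    have hlim : ∀ t : {x // x ∈ T}, ∃ L : ℝ,
        Tendsto (ratio H (((t : TopologicalSpace.Closeds (Pt F m)) : Set (Pt F m)) ∩ V) V)
          atTop (𝓝 L) :=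
      fun t => hdagger _ V ((t : TopologicalSpace.Closeds (Pt F m)).isClosed.isLocallyClosed.inter
        ⟨O', C', hO', hC', hVeq⟩) ⟨O', C', hO', hC', hVeq⟩ Set.inter_subset_right hVinf
    choose L hL using hlim
    have hsum : Tendsto (fun B => ∑ t ∈ T.attach,
        ratio H (((t : TopologicalSpace.Closeds (Pt F m)) : Set (Pt F m)) ∩ V) V B)
        atTop (𝓝 (∑ t ∈ T.attach, L t)) :=
      tendsto_finset_sum _ fun t _ => hL t
    have hpt : ∀ B, ratio H V V B ≤ ∑ t ∈ T.attach,
        ratio H (((t : TopologicalSpace.Closeds (Pt F m)) : Set (Pt F m)) ∩ V) V B := by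
      intro B
      refine ProjSatAux.ratio_le_sum hNorthcott T.attach
        (fun t => ((t : TopologicalSpace.Closeds (Pt F m)) : Set (Pt F m)) ∩ V) ?_ V B
      intro x hx
      have : x ∈ closure V := subset_closure hx
      rw [hcoe] at this
      obtain ⟨s, hs⟩ := Set.mem_iUnion.mp this
      obtain ⟨hsT, hxs⟩ := Set.mem_iUnion.mp hs
      exact Set.mem_iUnion.mpr ⟨⟨s, hsT⟩, Set.mem_iUnion.mpr ⟨Finset.mem_attach _ _, hxs, hx⟩⟩
    have hone : (1 : ℝ) ≤ ∑ t ∈ T.attach, L t :=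
      le_of_tendsto_of_tendsto' hVVone hsum hpt
    have : ∃ t ∈ T.attach, 0 < L t := by
      by_contra hcon
      push_neg at hcon
      have : (∑ t ∈ T.attach, L t) ≤ 0 := Finset.sum_nonpos hcon
      linarith
    obtain ⟨t, -, htpos⟩ := this
    refine ⟨(t : TopologicalSpace.Closeds (Pt F m)), hTirr t, ?_, L t, hL t, htpos⟩
    rw [hcoe]
    exact fun x hx => Set.mem_iUnion.mpr ⟨(t : TopologicalSpace.Closeds (Pt F m)),
      Set.mem_iUnion.mpr ⟨t.2, hx⟩⟩
  -- choose a minimal element of `𝒮`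
  obtain ⟨Z, hZ𝒮, hZmin⟩ := (IsWellFounded.wf :
    WellFounded ((· < ·) : TopologicalSpace.Closeds (Pt F m) →
      TopologicalSpace.Closeds (Pt F m) → Prop)).has_min 𝒮 h𝒮ne
  obtain ⟨hZirr, hZcl, δ, hδ, hδpos⟩ := hZ𝒮
  set W : Set (Pt F m) := (Z : Set (Pt F m)) ∩ V with hWdef
  have hWV : W ⊆ V := Set.inter_subset_right
  have hWO' : W = (Z : Set (Pt F m)) ∩ O' := by
    ext x
    constructor
    · rintro ⟨hxZ, hxV⟩
      exact ⟨hxZ, (hVeq ▸ hxV).1⟩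
    · rintro ⟨hxZ, hxO⟩
      refine ⟨hxZ, ?_⟩
      rw [hVeq]
      exact ⟨hxO, hclV (hZcl hxZ)⟩
  have hWlc : IsLocallyClosed W := ⟨O', (Z : Set (Pt F m)), hO', Z.isClosed,
    by rw [hWO', Set.inter_comm]⟩
  have hWinf : W.Infinite := by
    by_contra h
    rw [Set.not_infinite] at h
    have h0 := ProjSatAux.ratio_tendsto_zero_of_finite hNorthcott h hVinf
    have := tendsto_nhds_unique hδ h0
    linarith
  have hWne : W.Nonempty := hWinf.nonempty
  have hWirr : IsIrreducible W := by
    refine ⟨hWne, ?_⟩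
    rw [hWO']
    rintro u v hu hv ⟨a, ha⟩ ⟨b, hb⟩
    have hane : ((Z : Set (Pt F m)) ∩ (O' ∩ u)).Nonempty :=
      ⟨a, Set.mem_inter ha.1.1 (Set.mem_inter ha.1.2 ha.2)⟩
    have hbne : ((Z : Set (Pt F m)) ∩ (O' ∩ v)).Nonempty :=
      ⟨b, Set.mem_inter hb.1.1 (Set.mem_inter hb.1.2 hb.2)⟩
    obtain ⟨x, hx⟩ := hZirr.2 (O' ∩ u) (O' ∩ v) (hO'.inter hu) (hO'.inter hv) hane hbne
    have hxZ : x ∈ (Z : Set (Pt F m)) := hx.1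
    have hxu : x ∈ O' ∩ u := hx.2.1
    have hxv : x ∈ O' ∩ v := hx.2.2
    exact ⟨x, Set.mem_inter (Set.mem_inter hxZ hxu.1) (Set.mem_inter hxu.2 hxv.2)⟩
  -- the key property: every dense open subset of `W` has full density in `W`
  have hstrong : ∀ U : Set (Pt F m), IsDenseOpenIn U W →
      Tendsto (ratio H U W) atTop (𝓝 1) := by
    rintro U ⟨⟨O, hO, hUeq⟩, hUdense⟩
    have hUW : U ⊆ W := by rw [hUeq]; exact Set.inter_subset_left
    have hUne : U.Nonempty := by
      by_contra h
      rw [Set.not_nonempty_iff_eq_empty] at h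
      rw [h, closure_empty] at hUdense
      exact hUdense hWne.choose_spec
    obtain ⟨u₀, hu₀⟩ := hUne
    have hu₀O : u₀ ∈ O := (hUeq ▸ hu₀).2
    set D : TopologicalSpace.Closeds (Pt F m) :=
      ⟨(Z : Set (Pt F m)) ∩ Oᶜ, Z.isClosed.inter (isClosed_compl_iff.mpr hO)⟩ with hDdef
    have hDZ : D < Z := by
      refine lt_of_le_of_ne (fun x hx => hx.1) ?_
      intro hDZ
      have : u₀ ∈ (D : Set (Pt F m)) := by
        rw [hDZ]
        exact (hUW hu₀).1
      exact this.2 hu₀O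
    obtain ⟨T', hT'irr, hT'sup⟩ := TopologicalSpace.NoetherianSpace.exists_finset_irreducible D
    have hcoeD : (D : Set (Pt F m)) = ⋃ t ∈ T', (t : Set (Pt F m)) := by
      have h1 : (D : Set (Pt F m)) =
          ((T'.sup id : TopologicalSpace.Closeds (Pt F m)) : Set (Pt F m)) := by rw [← hT'sup]
      simpa [TopologicalSpace.Closeds.coe_finset_sup, Finset.sup_set_eq_biUnion] using h1
    -- each irreducible piece has zero density
    have hzero : ∀ t ∈ T', Tendsto (ratio H ((t : Set (Pt F m)) ∩ V) V) atTop (𝓝 0) := by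
      intro t ht
      obtain ⟨Lt, hLt⟩ := hdagger ((t : Set (Pt F m)) ∩ V) V
        (t.isClosed.isLocallyClosed.inter ⟨O', C', hO', hC', hVeq⟩)
        ⟨O', C', hO', hC', hVeq⟩ Set.inter_subset_right hVinf
      have htD : t ≤ D := by
        have := Finset.le_sup (f := id) ht
        rwa [← hT'sup] at this
      have htZ : t < Z := lt_of_le_of_lt htD hDZ
      have hnot : t ∉ 𝒮 := fun hmem => hZmin t hmem htZ
      have hLt0 : Lt ≤ 0 := by
        by_contra hgt
        push_neg at hgt
        refine hnot ⟨hT'irr ⟨t, ht⟩, ?_, Lt, hLt, hgt⟩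
        exact fun x hx => hZcl (htZ.le hx)
      have hLtge : 0 ≤ Lt := ge_of_tendsto hLt
        (Eventually.of_forall fun B => ProjSatAux.ratio_nonneg' _ _ _)
      have hLteq : Lt = 0 := le_antisymm hLt0 hLtge
      rwa [hLteq] at hLt
    -- `W \ U` is contained in the union of the pieces
    have hWUeq : W \ U = ((Z : Set (Pt F m)) ∩ Oᶜ) ∩ V := by
      ext x
      constructor
      · rintro ⟨⟨hxZ, hxV⟩, hxU⟩
        exact ⟨⟨hxZ, fun hxO => hxU (hUeq ▸ ⟨⟨hxZ, hxV⟩, hxO⟩)⟩, hxV⟩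
      · rintro ⟨⟨hxZ, hxO⟩, hxV⟩
        exact ⟨⟨hxZ, hxV⟩, fun hxU => hxO (hUeq ▸ hxU).2⟩
    have hsub : W \ U ⊆ ⋃ t ∈ T', ((t : Set (Pt F m)) ∩ V) := by
      intro x hx
      rw [hWUeq] at hx
      have hxD : x ∈ (D : Set (Pt F m)) := hx.1
      rw [hcoeD] at hxD
      obtain ⟨s, hs⟩ := Set.mem_iUnion.mp hxD
      obtain ⟨hsT, hxs⟩ := Set.mem_iUnion.mp hs
      exact Set.mem_iUnion.mpr ⟨s, Set.mem_iUnion.mpr ⟨hsT, hxs, hx.2⟩⟩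
    -- the density of `W \ U` in `V` is zero
    obtain ⟨L', hL'⟩ := hdagger (W \ U) V
      (by
        rw [hWUeq]
        exact (Z.isClosed.inter (isClosed_compl_iff.mpr hO)).isLocallyClosed.inter
          ⟨O', C', hO', hC', hVeq⟩)
      ⟨O', C', hO', hC', hVeq⟩ (Set.diff_subset.trans hWV) hVinf
    have hsumzero : Tendsto (fun B => ∑ t ∈ T',
        ratio H ((t : Set (Pt F m)) ∩ V) V B) atTop (𝓝 0) := by
      have := tendsto_finset_sum T' (fun t ht => hzero t ht)
      simpa using this
    have hL'le : L' ≤ 0 := le_of_tendsto_of_tendsto' hL' hsumzero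
      (fun B => ProjSatAux.ratio_le_sum hNorthcott T' _ hsub V B)
    have hL'ge : 0 ≤ L' := ge_of_tendsto hL'
      (Eventually.of_forall fun B => ProjSatAux.ratio_nonneg' _ _ _)
    have hL0 : Tendsto (ratio H (W \ U) V) atTop (𝓝 0) := by
      rwa [le_antisymm hL'le hL'ge] at hL'
    -- put things together
    have hdiv : Tendsto (fun B => ratio H (W \ U) V B / ratio H W V B) atTop (𝓝 0) := by
      have := hL0.div hδ hδpos.ne'
      simpa [Pi.div_def] using this
    have hkey : Tendsto (fun B => 1 - ratio H (W \ U) V B / ratio H W V B) atTop (𝓝 1) := by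
      have := (tendsto_const_nhds (x := (1 : ℝ)) (f := atTop)).sub hdiv
      simpa using this
    refine Tendsto.congr' ?_ hkey
    filter_upwards [ProjSatAux.eventually_ncount_pos hNorthcott hWne,
      ProjSatAux.eventually_ncount_pos hNorthcott hVne] with B hBW hBV
    have hW0 : (Ncount H W B : ℝ) ≠ 0 := by exact_mod_cast hBW.ne'
    have hV0 : (Ncount H V B : ℝ) ≠ 0 := by exact_mod_cast hBV.ne'
    have hsplit := ProjSatAux.ncount_split hNorthcott hUW B
    show 1 - ratio H (W \ U) V B / ratio H W V B = ratio H U W B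
    simp only [ratio]
    rw [div_div_div_cancel_right₀ hV0]
    rw [eq_div_iff hW0, sub_mul, one_mul, div_mul_cancel₀ _ hW0]
    linarith
  exact ⟨W, hWlc, hWV, hWirr, ⟨hWirr, hWinf, hstrong⟩, δ, hδ, hδpos⟩
end
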